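/- If a minimizer u_a of e(a) (0 ≤ a ≤ a*) exists for each a, then a ↦ ∫_{ℝ²}|u_a|⁴ dx is non-decreasing; in particular ∫|u_a|⁴ ≥ ∫|u_0|⁴ for all 0 ≤ a ≤ a*. -/
import Mathlib


open MeasureTheory Real Filter

noncomputable section

abbrev E2 : Type := EuclideanSpace ℝ (Fin 2)

/-- squared norm of the gradient -/
def gradSq (u : E2 → ℝ) (x : E2) : ℝ := ‖fderiv ℝ u x‖ ^ 2

/-- the Laplacian as the sum of second partial derivatives -/
def lap (u : E2 → ℝ) (x : E2) : ℝ :=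
  ∑ i : Fin 2, fderiv ℝ (fun y => fderiv ℝ u y (EuclideanSpace.single i 1)) x
      (EuclideanSpace.single i 1)

/-- membership in H¹(ℝ²) together with L⁴ (which follows by Sobolev embedding) -/
def IsH1 (u : E2 → ℝ) : Prop :=
  Differentiable ℝ u ∧ Integrable (fun x => u x ^ 2) ∧
    Integrable (gradSq u) ∧ Integrable (fun x => u x ^ 4)

/-- `Q` is the (unique) positive radial H¹ solution of `-ΔQ + Q - Q³ = 0` in ℝ² -/
def IsGroundState (Q : E2 → ℝ) : Prop :=
  ContDiff ℝ 2 Q ∧ (∀ x, 0 < Q x) ∧ (∀ x y : E2, ‖x‖ = ‖y‖ → Q x = Q y) ∧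
    IsH1 Q ∧ ∀ x, -lap Q x + Q x - Q x ^ 3 = 0

/-- the space 𝓗 : H¹ functions with finite potential energy -/
def InH (V : E2 → ℝ) (u : E2 → ℝ) : Prop :=
  IsH1 u ∧ Integrable (fun x => V x * u x ^ 2)

/-- the Gross–Pitaevskii functional -/
def Ea (V : E2 → ℝ) (a : ℝ) (u : E2 → ℝ) : ℝ :=
  (∫ x, gradSq u x) + (∫ x, V x * u x ^ 2) - a / 2 * (∫ x, u x ^ 4)

/-- a minimizer of the GP functional on the unit L² sphere of 𝓗 -/
def IsMinimizer (V : E2 → ℝ) (a : ℝ) (u : E2 → ℝ) : Prop :=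
  InH V u ∧ (∫ x, u x ^ 2) = 1 ∧
    ∀ v, InH V v → (∫ x, v x ^ 2) = 1 → Ea V a u ≤ Ea V a v

/-- the GP ground-state energy, with values in ℝ ∪ {±∞} -/
def gpE (V : E2 → ℝ) (a : ℝ) : EReal :=
  sInf {y : EReal | ∃ u, InH V u ∧ (∫ x, u x ^ 2) = 1 ∧ y = (Ea V a u : EReal)}
theorem stmt16 (Q : E2 → ℝ) (hQ : IsGroundState Q) (V : E2 → ℝ)
    (u : ℝ → E2 → ℝ)
    (hu : ∀ a : ℝ, 0 ≤ a → a ≤ (∫ x : E2, Q x ^ 2) → IsMinimizer V a (u a)) :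
    (∀ a b : ℝ, 0 ≤ a → a ≤ b → b ≤ (∫ x : E2, Q x ^ 2) →
      (∫ x : E2, u a x ^ 4) ≤ (∫ x : E2, u b x ^ 4)) ∧
    (∀ a : ℝ, 0 ≤ a → a ≤ (∫ x : E2, Q x ^ 2) →
      (∫ x : E2, u 0 x ^ 4) ≤ (∫ x : E2, u a x ^ 4)) := by

  have main : ∀ a b : ℝ, 0 ≤ a → a ≤ b → b ≤ (∫ x : E2, Q x ^ 2) →
      (∫ x : E2, u a x ^ 4) ≤ (∫ x : E2, u b x ^ 4) := by
    intro a b ha hab hb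
    rcases eq_or_lt_of_le hab with rfl | hlt
    · exact le_refl _
    have hma := hu a ha (hab.trans hb)
    have hmb := hu b (ha.trans hab) hb
    have h1 : Ea V a (u a) ≤ Ea V a (u b) := hma.2.2 (u b) hmb.1 hmb.2.1
    have h2 : Ea V b (u b) ≤ Ea V b (u a) := hmb.2.2 (u a) hma.1 hma.2.1
    unfold Ea at h1 h2
    nlinarith [sub_pos.mpr hlt]
  exact ⟨main, fun a ha ha' => main 0 a le_rfl ha ha'⟩
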